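/- For every FPA equilibrium and every integral allocation pi^{I*} achieving I-OPT, it holds that sum_{i in A_Bbar1} sum_{j in O(i) \ N(i)} Spend(j) + LW(A_Bbar1) ≥ I-OPT(A_Bbar1). -/

import Mathlib

open Finset
open scoped Classical

noncomputable section

/-- An allocation: each entry in `[0,1]`, and each query allocated total probability at most 1. -/
def IsAlloc {n q : ℕ} (π : Fin n → Fin q → ℝ) : Prop :=
  (∀ i j, 0 ≤ π i j) ∧ (∀ i j, π i j ≤ 1) ∧ ∀ j, ∑ i, π i j ≤ 1

/-- An integral (deterministic) allocation. -/
def IsIntegralAlloc {n q : ℕ} (π : Fin n → Fin q → ℝ) : Prop :=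
  IsAlloc π ∧ ∀ i j, π i j = 0 ∨ π i j = 1

/-- Liquid welfare of an allocation. -/
def allocLW {n q : ℕ} (B : Fin n → ℝ) (v π : Fin n → Fin q → ℝ) : ℝ :=
  ∑ i, min (B i) (∑ j, π i j * v i j)

/-- A deterministic tie-breaking / winner rule for first-price auctions:
given a bid profile, it selects on each query a bidder whose bid is maximal. -/
def IsWinnerRule {n q : ℕ} (W : (Fin n → Fin q → ℝ) → Fin q → Fin n) : Prop :=
  ∀ (b : Fin n → Fin q → ℝ) (j : Fin q) (i : Fin n), b i j ≤ b (W b j) j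

/-- The set of queries bidder `i` wins under bid profile `b`. -/
def fpaN {n q : ℕ} (W : (Fin n → Fin q → ℝ) → Fin q → Fin n)
    (b : Fin n → Fin q → ℝ) (i : Fin n) : Finset (Fin q) :=
  Finset.univ.filter fun j => W b j = i

/-- The total value bidder `i` obtains. -/
def fpaV {n q : ℕ} (v : Fin n → Fin q → ℝ) (W : (Fin n → Fin q → ℝ) → Fin q → Fin n)
    (b : Fin n → Fin q → ℝ) (i : Fin n) : ℝ :=
  ∑ j ∈ fpaN W b i, v i j

/-- The spend (winning bid) on query `j`. -/
def fpaSpendQ {n q : ℕ} (W : (Fin n → Fin q → ℝ) → Fin q → Fin n)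
    (b : Fin n → Fin q → ℝ) (j : Fin q) : ℝ :=
  b (W b j) j

/-- The total spend of bidder `i`. -/
def fpaSpendI {n q : ℕ} (W : (Fin n → Fin q → ℝ) → Fin q → Fin n)
    (b : Fin n → Fin q → ℝ) (i : Fin n) : ℝ :=
  ∑ j ∈ fpaN W b i, b i j

/-- Liquid welfare of a bid profile in FPA. -/
def fpaLW {n q : ℕ} (B : Fin n → ℝ) (v : Fin n → Fin q → ℝ)
    (W : (Fin n → Fin q → ℝ) → Fin q → Fin n) (b : Fin n → Fin q → ℝ) : ℝ :=
  ∑ i, min (B i) (fpaV v W b i)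

/-- Equilibrium of a first-price auction with ROS and budget constraints:
bids are nonnegative, each bidder satisfies their constraints, and for any deviation
of a single bidder, either the bidder's value does not increase, or a constraint is violated. -/
def IsFpaEq {n q : ℕ} (B : Fin n → ℝ) (v : Fin n → Fin q → ℝ)
    (W : (Fin n → Fin q → ℝ) → Fin q → Fin n) (b : Fin n → Fin q → ℝ) : Prop :=
  (∀ i j, 0 ≤ b i j) ∧
  (∀ i, fpaSpendI W b i ≤ min (B i) (fpaV v W b i)) ∧
  (∀ i (b' : Fin q → ℝ), (∀ j, 0 ≤ b' j) →
    (∑ j ∈ fpaN W (Function.update b i b') i, v i j ≤ fpaV v W b i) ∨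
    (min (B i) (∑ j ∈ fpaN W (Function.update b i b') i, v i j)
      < ∑ j ∈ fpaN W (Function.update b i b') i, b' j))

/-- Key per-bidder lemma: if bidder `i` is value-unsaturated and there is a query `j0 ∈ S`
(queries `i` does not win) with `v i j0 + V_i ≥ B i`, then `B i ≤ Spend(S) + V_i`. -/
lemma stmt6_key {n q : ℕ} (B : Fin n → ℝ) (v : Fin n → Fin q → ℝ)
    (hv : ∀ i j, 0 ≤ v i j)
    (W : (Fin n → Fin q → ℝ) → Fin q → Fin n) (hW : IsWinnerRule W)
    (b : Fin n → Fin q → ℝ) (hb : IsFpaEq B v W b)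
    (i : Fin n) (S : Finset (Fin q)) (hS : ∀ j ∈ S, W b j ≠ i)
    (j0 : Fin q) (hj0 : j0 ∈ S) (hV : fpaV v W b i < B i)
    (hj0v : B i ≤ v i j0 + fpaV v W b i) :
    B i ≤ (∑ j ∈ S, fpaSpendQ W b j) + fpaV v W b i := by
  obtain ⟨hpos, hcons, hdev⟩ := hb
  have hSpQ : ∀ j, 0 ≤ fpaSpendQ W b j := fun j => hpos _ j
  have main : ∀ ε : ℝ, 0 < ε →
      B i ≤ (∑ j ∈ S, fpaSpendQ W b j) + fpaV v W b i + q * ε := by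
    intro ε hε
    set T : Finset (Fin q) := fpaN W b i ∪ S with hT
    set b' : Fin q → ℝ := fun j => if j ∈ T then fpaSpendQ W b j + ε else 0 with hb'
    have hb'nn : ∀ j, 0 ≤ b' j := by
      intro j; simp only [hb']
      split
      · exact add_nonneg (hSpQ j) hε.le
      · exact le_refl 0
    set b2 := Function.update b i b' with hb2
    have hwin : ∀ j ∈ T, W b2 j = i := by
      intro j hj
      by_contra hne
      have h1 : b2 i j ≤ b2 (W b2 j) j := hW b2 j i
      have h2 : b2 (W b2 j) j = b (W b2 j) j := by
        exact congrFun (Function.update_of_ne hne b' b) j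
      have h3 : b (W b2 j) j ≤ fpaSpendQ W b j := hW b j _
      have h4 : b2 i j = fpaSpendQ W b j + ε := by
        simp [hb2, hb', if_pos hj]
      rw [h4, h2] at h1
      linarith
    have hTsub : T ⊆ fpaN W b2 i := by
      intro j hj
      simp [fpaN, hwin j hj]
    have hdisj : Disjoint (fpaN W b i) S := by
      rw [Finset.disjoint_left]
      intro j hj hjS
      exact hS j hjS (by simpa [fpaN] using hj)
    have hvalT : fpaV v W b i + v i j0 ≤ ∑ j ∈ T, v i j := by
      rw [hT, Finset.sum_union hdisj]
      have : v i j0 ≤ ∑ j ∈ S, v i j :=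
        Finset.single_le_sum (fun j _ => hv i j) hj0
      unfold fpaV; linarith
    have hval : B i ≤ ∑ j ∈ fpaN W b2 i, v i j := by
      calc B i ≤ v i j0 + fpaV v W b i := hj0v
        _ ≤ ∑ j ∈ T, v i j := by linarith
        _ ≤ ∑ j ∈ fpaN W b2 i, v i j :=
            Finset.sum_le_sum_of_subset_of_nonneg hTsub (fun j _ _ => hv i j)
    rcases hdev i b' hb'nn with h | h
    · rw [← hb2] at h; linarith
    · rw [← hb2] at h
      rw [min_eq_left hval] at h
      have hpay : ∑ j ∈ fpaN W b2 i, b' j ≤ ∑ j ∈ T, (fpaSpendQ W b j + ε) := by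
        have e1 : ∑ j ∈ fpaN W b2 i, b' j
            = ∑ j ∈ fpaN W b2 i ∩ T, (fpaSpendQ W b j + ε) :=
          Finset.sum_ite_mem _ _ _
        rw [e1]
        exact Finset.sum_le_sum_of_subset_of_nonneg Finset.inter_subset_right
          (fun j _ _ => add_nonneg (hSpQ j) hε.le)
      have eT : ∑ j ∈ T, (fpaSpendQ W b j + ε)
          = (∑ j ∈ T, fpaSpendQ W b j) + T.card * ε := by
        rw [Finset.sum_add_distrib, Finset.sum_const, nsmul_eq_mul]
      have eNT : ∑ j ∈ T, fpaSpendQ W b j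
          = (∑ j ∈ fpaN W b i, fpaSpendQ W b j) + ∑ j ∈ S, fpaSpendQ W b j := by
        rw [hT, Finset.sum_union hdisj]
      have eN : ∑ j ∈ fpaN W b i, fpaSpendQ W b j = fpaSpendI W b i := by
        apply Finset.sum_congr rfl
        intro j hj
        have : W b j = i := by simpa [fpaN] using hj
        simp [fpaSpendQ, fpaSpendI, this]
      have hSpI : fpaSpendI W b i ≤ fpaV v W b i :=
        le_trans (hcons i) (min_le_right _ _)
      have hcard : (T.card : ℝ) ≤ (q : ℝ) := by
        have : T.card ≤ q := by
          simpa using Finset.card_le_card (Finset.subset_univ T)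
        exact_mod_cast this
      have hcard' : (T.card : ℝ) * ε ≤ (q : ℝ) * ε :=
        mul_le_mul_of_nonneg_right hcard hε.le
      rw [eNT, eN] at eT
      linarith [hpay, h]
  have : ∀ ε : ℝ, 0 < ε →
      B i ≤ (∑ j ∈ S, fpaSpendQ W b j) + fpaV v W b i + ε := by
    intro ε hε
    have hq1 : (0:ℝ) < q + 1 := by positivity
    have := main (ε / (q + 1)) (by positivity)
    have hle : (q : ℝ) * (ε / (q + 1)) ≤ ε := by
      rw [mul_div_assoc']
      rw [div_le_iff₀ hq1]
      nlinarith [hε.le]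
    linarith
  exact le_of_forall_pos_le_add this

/-- for every FPA equilibrium and every integral allocation `πs` achieving `I-OPT`
(with `O(i) = {j : πs i j = 1}`),
`∑_{i ∈ A_Bbar1} ∑_{j ∈ O(i) \ N(i)} Spend(j) + LW(A_Bbar1) ≥ I-OPT(A_Bbar1)`. -/
theorem stmt6 (n q : ℕ) (B : Fin n → ℝ) (v : Fin n → Fin q → ℝ)
    (hB : ∀ i, 0 < B i) (hv : ∀ i j, 0 ≤ v i j)
    (W : (Fin n → Fin q → ℝ) → Fin q → Fin n) (hW : IsWinnerRule W)
    (b : Fin n → Fin q → ℝ) (hb : IsFpaEq B v W b)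
    (πs : Fin n → Fin q → ℝ) (hπ : IsIntegralAlloc πs)
    (hopt : ∀ π : Fin n → Fin q → ℝ, IsIntegralAlloc π → allocLW B v π ≤ allocLW B v πs) :
    ∑ i ∈ Finset.univ.filter (fun i : Fin n => fpaV v W b i < B i ∧
        ∃ j, πs i j = 1 ∧ W b j ≠ i ∧ B i ≤ v i j + fpaV v W b i),
        ((∑ j ∈ Finset.univ.filter (fun j : Fin q => πs i j = 1 ∧ W b j ≠ i), fpaSpendQ W b j)
          + min (B i) (fpaV v W b i))
      ≥ ∑ i ∈ Finset.univ.filter (fun i : Fin n => fpaV v W b i < B i ∧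
          ∃ j, πs i j = 1 ∧ W b j ≠ i ∧ B i ≤ v i j + fpaV v W b i),
          min (B i) (∑ j ∈ Finset.univ.filter (fun j : Fin q => πs i j = 1), v i j) := by
  apply Finset.sum_le_sum
  intro i hi
  rw [Finset.mem_filter] at hi
  obtain ⟨-, hV, j0, hj0π, hj0W, hj0v⟩ := hi
  set S : Finset (Fin q) := Finset.univ.filter (fun j : Fin q => πs i j = 1 ∧ W b j ≠ i)
    with hSdef
  have hj0S : j0 ∈ S := by simp [hSdef, hj0π, hj0W]
  have hS : ∀ j ∈ S, W b j ≠ i := by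
    intro j hj
    exact (Finset.mem_filter.mp hj).2.2
  have key := stmt6_key B v hv W hW b hb i S hS j0 hj0S hV hj0v
  have hmin : min (B i) (fpaV v W b i) = fpaV v W b i := min_eq_right hV.le
  rw [hmin]
  calc min (B i) (∑ j ∈ Finset.univ.filter (fun j : Fin q => πs i j = 1), v i j)
      ≤ B i := min_le_left _ _
    _ ≤ (∑ j ∈ S, fpaSpendQ W b j) + fpaV v W b i := key
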